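/- arXiv:1512.00739 — 2 statements merged into one kernel-verified Lean document; each statement's English description precedes it below -/
import Mathlib

section
/- Let K' = {z ∈ ℂ : |z| ≤ 1} be the closed unit disk, let ν be normalized arclength measure dθ/2π on the unit circle, and let Q(z) = |z|². Then (K', ν, Q) does not satisfy the weighted Bernstein–Markov property. In fact, for the monomials p_k(z) = z^k one has sup_{z ∈ K'} |z|^k e^{-k|z|²} = (2e)^{-k/2} and (∫ |z|^{2k} e^{-2k|z|²} dν)^{1/2} = e^{-k}, so the ratio of the weighted sup norm to the weighted L²(ν) norm equals (e/2)^{k/2}, whose k-th root is √(e/2) > 1 for all k. -/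
open MeasureTheory

/-- Normalized arclength measure `dθ/2π` on the unit circle in `ℂ`. -/
noncomputable def arcMeasure : Measure ℂ :=
  (ENNReal.ofReal (2 * Real.pi))⁻¹ •
    Measure.map (fun θ : ℝ => Complex.exp (θ * Complex.I))
      (volume.restrict (Set.Ico 0 (2 * Real.pi)))

/-- `(K, ν, Q)` satisfies the weighted Bernstein–Markov property (with `w = e^{-Q}`):
for every `ε > 0` there is `C > 0` such that for every `k ≥ 1` and every polynomial `p`
of degree at most `k`, `sup_{z ∈ K} |p(z)| w(z)^k ≤ C (1+ε)^k (∫_K |p|² w^{2k} dν)^{1/2}`. -/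
def WeightedBernsteinMarkov (K : Set ℂ) (ν : Measure ℂ) (Q : ℂ → ℝ) : Prop :=
  ∀ ε : ℝ, 0 < ε → ∃ C : ℝ, 0 < C ∧ ∀ k : ℕ, 1 ≤ k → ∀ p : Polynomial ℂ,
    p.natDegree ≤ k → ∀ z ∈ K,
      ‖p.eval z‖ * Real.exp (-Q z) ^ k ≤
        C * (1 + ε) ^ k *
          Real.sqrt (∫ w in K, ‖p.eval w‖ ^ 2 * Real.exp (-Q w) ^ (2 * k) ∂ν)

lemma aux_exp_half : Real.sqrt (Real.exp 1) = Real.exp 2⁻¹ := by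
  rw [show Real.exp 1 = Real.exp 2⁻¹ ^ 2 by rw [← Real.exp_nat_mul]; norm_num,
    Real.sqrt_sq (Real.exp_pos _).le]

lemma aux_pointwise (r : ℝ) : r * Real.exp (-r^2) ≤ (Real.sqrt 2)⁻¹ * Real.exp (-2⁻¹) := by
  have hs : Real.sqrt 2 * Real.sqrt 2 = 2 := Real.mul_self_sqrt (by norm_num)
  have hs0 : (0:ℝ) < Real.sqrt 2 := Real.sqrt_pos.mpr (by norm_num)
  have hE : (0:ℝ) < Real.exp (-r^2) := Real.exp_pos _
  have h1 : r^2 - 2⁻¹ + 1 ≤ Real.exp (r^2 - 2⁻¹) := Real.add_one_le_exp _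
  have h2 : Real.exp (r^2 - 2⁻¹) * Real.exp (-r^2) = Real.exp (-2⁻¹) := by
    rw [← Real.exp_add]; ring_nf
  have h5 : (Real.sqrt 2)⁻¹ * Real.sqrt 2 = 1 := inv_mul_cancel₀ hs0.ne'
  have h4 : Real.sqrt 2 * r ≤ r^2 + 2⁻¹ := by
    nlinarith [sq_nonneg (r - (Real.sqrt 2)⁻¹)]
  have h6 : Real.sqrt 2 * r * Real.exp (-r^2) ≤ Real.exp (-2⁻¹) := by
    calc Real.sqrt 2 * r * Real.exp (-r^2) ≤ (r^2 + 2⁻¹) * Real.exp (-r^2) :=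
          mul_le_mul_of_nonneg_right h4 hE.le
      _ ≤ Real.exp (r^2 - 2⁻¹) * Real.exp (-r^2) :=
          mul_le_mul_of_nonneg_right (by linarith) hE.le
      _ = Real.exp (-2⁻¹) := h2
  rw [inv_mul_eq_div, le_div_iff₀ hs0]
  linarith [h6]

lemma aux_rpow (k : ℕ) : (2 * Real.exp 1) ^ (-(k:ℝ)/2) =
    ((Real.sqrt 2)⁻¹ * Real.exp (-2⁻¹))^k := by
  have h2e : (0:ℝ) < 2 * Real.exp 1 := by positivity
  have base : (2 * Real.exp 1) ^ (-(1/2) : ℝ) = (Real.sqrt 2)⁻¹ * Real.exp (-2⁻¹) := by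
    rw [Real.rpow_neg h2e.le, ← Real.sqrt_eq_rpow, Real.sqrt_mul (by norm_num),
      aux_exp_half, mul_inv, ← Real.exp_neg]
  calc (2 * Real.exp 1) ^ (-(k:ℝ)/2)
      = ((2 * Real.exp 1) ^ (-(1/2):ℝ)) ^ (k:ℝ) := by
        rw [← Real.rpow_mul h2e.le]; congr 1; ring
    _ = ((Real.sqrt 2)⁻¹ * Real.exp (-2⁻¹))^k := by
        rw [base, Real.rpow_natCast]

lemma aux_integral (k : ℕ) :
    ∫ z in {z : ℂ | ‖z‖ ≤ 1}, ‖z‖ ^ (2*k) * Real.exp (-‖z‖^2) ^ (2*k) ∂arcMeasure =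
      Real.exp (-1) ^ (2*k) := by
  have hg : Measurable (fun θ : ℝ => Complex.exp (θ * Complex.I)) := by
    fun_prop
  have hS : MeasurableSet {z : ℂ | ‖z‖ ≤ 1} :=
    (isClosed_le (by fun_prop) continuous_const).measurableSet
  have hnorm : ∀ θ : ℝ, ‖Complex.exp (θ * Complex.I)‖ = 1 := by
    intro θ
    simp [Complex.norm_exp]
  have hpre : (fun θ : ℝ => Complex.exp (θ * Complex.I)) ⁻¹' {z : ℂ | ‖z‖ ≤ 1} = Set.univ := by
    ext θ; simp [hnorm θ]
  have hf : AEStronglyMeasurable (fun z : ℂ => ‖z‖ ^ (2*k) * Real.exp (-‖z‖^2) ^ (2*k))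
      ((volume.restrict (Set.Ico 0 (2 * Real.pi))).map (fun θ : ℝ => Complex.exp (θ * Complex.I))) := by
    apply Continuous.aestronglyMeasurable
    fun_prop
  rw [arcMeasure, Measure.restrict_smul, integral_smul_measure, Measure.restrict_map hg hS,
    hpre, Measure.restrict_univ, integral_map hg.aemeasurable hf]
  simp only [hnorm, one_pow, one_mul]
  rw [integral_const]
  simp only [MeasurableSet.univ, Measure.restrict_apply, Set.univ_inter, Real.volume_Ico,
    smul_eq_mul, sub_zero]
  rw [ENNReal.toReal_inv, ENNReal.toReal_ofReal Real.two_pi_pos.le]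
  field_simp
  simp [measureReal_def, Real.volume_Ico, Real.two_pi_pos.le, Real.pi_pos.le]

lemma aux_sqrt_int (k : ℕ) :
    Real.sqrt (∫ z in {z : ℂ | ‖z‖ ≤ 1},
        ‖z‖ ^ (2*k) * Real.exp (-‖z‖^2) ^ (2*k) ∂arcMeasure) = Real.exp (-(k:ℝ)) := by
  rw [aux_integral, show Real.exp (-1) ^ (2*k) = Real.exp (-(k:ℝ)) ^ 2 by
    rw [← Real.exp_nat_mul, ← Real.exp_nat_mul]; congr 1; push_cast; ring,
    Real.sqrt_sq (Real.exp_pos _).le]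

lemma aux_A_norm : ‖(((Real.sqrt 2)⁻¹ : ℝ) : ℂ)‖ = (Real.sqrt 2)⁻¹ := by
  rw [Complex.norm_real, Real.norm_eq_abs, abs_of_nonneg (by positivity)]

lemma aux_A_sq : ((Real.sqrt 2)⁻¹)^2 = (2:ℝ)⁻¹ := by
  rw [inv_pow, Real.sq_sqrt (by norm_num : (0:ℝ) ≤ 2)]

lemma aux_A_le_one : (Real.sqrt 2)⁻¹ ≤ (1:ℝ) := by
  have : (1:ℝ) ≤ Real.sqrt 2 := by
    nlinarith [Real.sq_sqrt (by norm_num : (0:ℝ) ≤ 2), Real.sqrt_nonneg 2]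
  exact inv_le_one_of_one_le₀ this

lemma aux_sup (k : ℕ) :
    sSup ((fun z : ℂ => ‖z‖ ^ k * Real.exp (-‖z‖ ^ 2) ^ k) '' {z : ℂ | ‖z‖ ≤ 1}) =
      (2 * Real.exp 1) ^ (-(k : ℝ) / 2) := by
  rw [aux_rpow]
  apply IsGreatest.csSup_eq
  constructor
  · refine ⟨(((Real.sqrt 2)⁻¹ : ℝ) : ℂ), ?_, ?_⟩
    · simp only [Set.mem_setOf_eq, aux_A_norm]
      exact aux_A_le_one
    · simp only [aux_A_norm, aux_A_sq, mul_pow]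
  · rintro y ⟨z, _, rfl⟩
    simp only
    rw [← mul_pow]
    apply pow_le_pow_left₀ (by positivity)
    exact aux_pointwise ‖z‖

lemma aux_one_lt : 1 < Real.sqrt (Real.exp 1 / 2) := by
  have h := Real.sqrt_lt_sqrt (by norm_num : (0:ℝ) ≤ 1)
    (by linarith [Real.exp_one_gt_d9] : (1:ℝ) < Real.exp 1 / 2)
  rwa [Real.sqrt_one] at h

lemma aux_ratio (k : ℕ) (hk : 1 ≤ k) :
    (2 * Real.exp 1) ^ (-(k : ℝ) / 2) / Real.exp (-(k : ℝ)) =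
        (Real.exp 1 / 2) ^ ((k : ℝ) / 2) ∧
      ((Real.exp 1 / 2) ^ ((k : ℝ) / 2)) ^ ((1 : ℝ) / (k : ℝ)) =
        Real.sqrt (Real.exp 1 / 2) := by
  have hk0 : (k:ℝ) ≠ 0 := by positivity
  constructor
  · rw [Real.rpow_def_of_pos (by positivity), Real.rpow_def_of_pos (by positivity),
      ← Real.exp_sub]
    congr 1
    rw [Real.log_mul (by norm_num) (Real.exp_pos 1).ne', Real.log_exp,
      Real.log_div (Real.exp_pos 1).ne' (by norm_num), Real.log_exp]
    ring
  · rw [← Real.rpow_mul (by positivity),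
      show ((k:ℝ)/2) * ((1:ℝ)/(k:ℝ)) = (1/2 : ℝ) by field_simp,
      ← Real.sqrt_eq_rpow]

lemma aux_not : ¬ WeightedBernsteinMarkov {z : ℂ | ‖z‖ ≤ 1} arcMeasure (fun z => ‖z‖ ^ 2) := by
  intro H
  set s := Real.sqrt (Real.exp 1 / 2) with hs_def
  have hs1 : 1 < s := aux_one_lt
  obtain ⟨C, hC, hBM⟩ := H ((s - 1)/2) (by linarith)
  set ε := (s-1)/2 with hε_def
  have hε0 : 0 < 1 + ε := by simp only [hε_def]; linarith
  have hεs : 1 + ε < s := by simp only [hε_def]; linarith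
  have hs_eq : s = (Real.sqrt 2)⁻¹ * Real.exp (-2⁻¹) * Real.exp 1 := by
    rw [hs_def, Real.sqrt_div (Real.exp_pos 1).le 2, aux_exp_half, mul_assoc, ← Real.exp_add,
      show (-2⁻¹ + 1 : ℝ) = 2⁻¹ by norm_num, div_eq_mul_inv, mul_comm]
  have key : ∀ k : ℕ, 1 ≤ k → (s / (1+ε))^k ≤ C := by
    intro k hk
    have hz : (((Real.sqrt 2)⁻¹ : ℝ) : ℂ) ∈ {z : ℂ | ‖z‖ ≤ 1} := by
      simp only [Set.mem_setOf_eq, aux_A_norm]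
      exact aux_A_le_one
    have hdeg : (Polynomial.X ^ k : Polynomial ℂ).natDegree ≤ k := by
      simp [Polynomial.natDegree_X_pow]
    have hineq := hBM k hk (Polynomial.X ^ k) hdeg _ hz
    simp only [Polynomial.eval_pow, Polynomial.eval_X, norm_pow, aux_A_norm, aux_A_sq,
      ← pow_mul, mul_comm _ 2] at hineq
    rw [aux_sqrt_int k,
      show Real.exp (-(k:ℝ)) = Real.exp (-1)^k by
        rw [← Real.exp_nat_mul]; congr 1; push_cast; ring] at hineq
    have hmul := mul_le_mul_of_nonneg_right hineq (pow_nonneg (Real.exp_pos 1).le k)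
    have h7 : s^k ≤ C * (1+ε)^k := by
      calc s^k = ((Real.sqrt 2)⁻¹^k * Real.exp (-2⁻¹)^k) * Real.exp 1^k := by
            rw [hs_eq, mul_pow, mul_pow]
        _ ≤ (C * (1+ε)^k * Real.exp (-1)^k) * Real.exp 1^k := hmul
        _ = C * (1+ε)^k * (Real.exp (-1) * Real.exp 1)^k := by
            rw [mul_assoc, ← mul_pow]
        _ = C * (1+ε)^k := by rw [← Real.exp_add]; norm_num
    rw [div_pow, div_le_iff₀ (pow_pos hε0 k)]
    exact h7
  have hr : 1 < s / (1+ε) := (one_lt_div hε0).mpr hεs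
  obtain ⟨n, hn⟩ := pow_unbounded_of_one_lt C hr
  have h1 : (s/(1+ε))^(n+1) ≤ C := key (n+1) (by omega)
  have h2 : (s/(1+ε))^n ≤ (s/(1+ε))^(n+1) := pow_le_pow_right₀ hr.le (by omega)
  linarith

/-- For the closed unit disk `K'`, normalized arclength measure `ν = dθ/2π` on the
unit circle, and `Q(z) = |z|²`, the triple `(K', ν, Q)` does not satisfy the weighted
Bernstein–Markov property.  In fact, for the monomials `p_k(z) = z^k` one has
`sup_{z ∈ K'} |z|^k e^{-k|z|²} = (2e)^{-k/2}` and
`(∫ |z|^{2k} e^{-2k|z|²} dν)^{1/2} = e^{-k}`, so the ratio of the weighted sup norm to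
the weighted `L²(ν)` norm equals `(e/2)^{k/2}`, whose `k`-th root is `√(e/2) > 1`. -/
theorem disk_not_weighted_bernstein_markov :
    ¬ WeightedBernsteinMarkov {z : ℂ | ‖z‖ ≤ 1} arcMeasure (fun z => ‖z‖ ^ 2) ∧
    (∀ k : ℕ, 1 ≤ k →
      sSup ((fun z : ℂ => ‖z‖ ^ k * Real.exp (-‖z‖ ^ 2) ^ k) '' {z : ℂ | ‖z‖ ≤ 1}) =
        (2 * Real.exp 1) ^ (-(k : ℝ) / 2)) ∧
    (∀ k : ℕ, 1 ≤ k →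
      Real.sqrt (∫ z in {z : ℂ | ‖z‖ ≤ 1},
          ‖z‖ ^ (2 * k) * Real.exp (-‖z‖ ^ 2) ^ (2 * k) ∂arcMeasure) =
        Real.exp (-(k : ℝ))) ∧
    (∀ k : ℕ, 1 ≤ k →
      (2 * Real.exp 1) ^ (-(k : ℝ) / 2) / Real.exp (-(k : ℝ)) =
        (Real.exp 1 / 2) ^ ((k : ℝ) / 2) ∧
      ((Real.exp 1 / 2) ^ ((k : ℝ) / 2)) ^ ((1 : ℝ) / (k : ℝ)) =
        Real.sqrt (Real.exp 1 / 2)) ∧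
    1 < Real.sqrt (Real.exp 1 / 2) :=
  ⟨aux_not, fun k _ => aux_sup k, fun k _ => aux_sqrt_int k, aux_ratio, aux_one_lt⟩
end

section
/- Let K ⊂ ℂ^n be a nonempty compact set, let ε, δ > 0, let k ≥ 1, and let p be a polynomial of degree at most k in n complex variables such that |p(ζ)| ≤ e^{kε} · sup_{ξ ∈ K} |p(ξ)| for every ζ ∈ ℂ^n with dist(ζ, K) ≤ δ. Let w ∈ K be a point with |p(w)| = sup_{ξ ∈ K} |p(ξ)|. Then for every z ∈ ℂ^n with |z − w| < (δ/3) e^{-kε} one has |p(z)| ≥ (1/2) sup_{ξ ∈ K} |p(ξ)|. -/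
open Polynomial Complex

lemma poly_coeff_bound (q : Polynomial ℂ) (r C : ℝ) (hr : 0 < r)
    (hC : ∀ t : ℂ, ‖t‖ ≤ r → ‖q.eval t‖ ≤ C) (j : ℕ) :
    ‖q.coeff j‖ * r ^ j ≤ C := by
  set f : ℂ → ℂ := fun t => q.eval t with hf
  set P : FormalMultilinearSeries ℂ ℂ ℂ :=
    FormalMultilinearSeries.ofScalars ℂ (fun j => q.coeff j) with hPdef
  have hPtop : P.radius = ⊤ := by
    apply FormalMultilinearSeries.radius_eq_top_of_forall_image_add_eq_zero _ (q.natDegree + 1)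
    intro m
    apply FormalMultilinearSeries.ofScalars_eq_zero_of_scalar_zero
    exact q.coeff_eq_zero_of_natDegree_lt (by omega)
  lift r to NNReal using hr.le with R hR
  have hRpos : 0 < R := by exact_mod_cast hr
  have hP : HasFPowerSeriesOnBall f P 0 R := by
    constructor
    · rw [hPtop]; exact le_top
    · exact_mod_cast hRpos
    · intro y hy
      have h0 : ∀ j ∉ Finset.range (q.natDegree + 1), (P j fun _ => y) = 0 := by
        intro j hj
        rw [FormalMultilinearSeries.ofScalars_apply_eq]
        rw [q.coeff_eq_zero_of_natDegree_lt (by simp at hj; omega)]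
        simp
      have := hasSum_sum_of_ne_finset_zero (L := SummationFilter.unconditional ℕ) h0
      convert this using 1
      · rfl
      rw [zero_add]
      show Polynomial.eval y q = _
      rw [Polynomial.eval_eq_sum_range]
      apply Finset.sum_congr rfl
      intro j hj
      rw [FormalMultilinearSeries.ofScalars_apply_eq]
      simp [smul_eq_mul]
  have hdiff : Differentiable ℂ f := q.differentiable
  have hQ : HasFPowerSeriesOnBall f (cauchyPowerSeries f 0 R) 0 R :=
    (hdiff.differentiableOn.hasFPowerSeriesOnBall hRpos)
  have heq : P = cauchyPowerSeries f 0 R :=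
    hP.hasFPowerSeriesAt.eq_formalMultilinearSeries hQ.hasFPowerSeriesAt
  have hnorm : ‖q.coeff j‖ = ‖P j‖ := (FormalMultilinearSeries.ofScalars_norm ℂ (fun j => q.coeff j) j).symm
  have hle := norm_cauchyPowerSeries_le f 0 R j
  have hint : (∫ θ : ℝ in (0)..2 * Real.pi, ‖f (circleMap 0 R θ)‖) ≤ 2 * Real.pi * C := by
    have hcont : Continuous fun θ : ℝ => ‖f (circleMap 0 R θ)‖ :=
      (q.continuous_aeval.comp (continuous_circleMap 0 R)).norm |>.congr (by intro x; rfl)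
    have hCnn : 0 ≤ C := le_trans (norm_nonneg (f 0)) (hC 0 (by simp [hr.le]))
    calc (∫ θ : ℝ in (0)..2 * Real.pi, ‖f (circleMap 0 R θ)‖)
        ≤ ∫ _ : ℝ in (0)..2 * Real.pi, C := by
          apply intervalIntegral.integral_mono_on Real.two_pi_pos.le
            (hcont.intervalIntegrable _ _) (intervalIntegrable_const)
          intro θ _
          apply hC
          rw [norm_circleMap_zero, _root_.abs_of_nonneg (NNReal.coe_nonneg R)]
      _ = 2 * Real.pi * C := by simp [mul_comm]
  have hCnn : 0 ≤ C := le_trans (norm_nonneg (f 0)) (hC 0 (by simp [hr.le]))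
  have h1 : ‖q.coeff j‖ ≤ C * ((R : ℝ)⁻¹) ^ j := by
    rw [hnorm, heq]
    refine hle.trans ?_
    have habs : |(R : ℝ)| = (R : ℝ) := _root_.abs_of_nonneg (NNReal.coe_nonneg R)
    rw [habs]
    gcongr
    rw [inv_mul_le_iff₀ Real.two_pi_pos]
    linarith [hint]
  calc ‖q.coeff j‖ * (R : ℝ) ^ j ≤ (C * ((R : ℝ)⁻¹) ^ j) * (R : ℝ) ^ j := by
        gcongr
    _ = C * ((R : ℝ)⁻¹ * R) ^ j := by ring
    _ = C := by rw [inv_mul_cancel₀ (ne_of_gt hr)]; simp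

lemma eval_aeval_line {n : ℕ} (f : Fin n → Polynomial ℂ) (p : MvPolynomial (Fin n) ℂ) (t : ℂ) :
    Polynomial.eval t (MvPolynomial.aeval f p) =
      MvPolynomial.eval (fun i => (f i).eval t) p := by
  have h := MvPolynomial.comp_aeval_apply (φ := Polynomial.aeval t) (f := f) p
  simp only [Polynomial.aeval_def, Polynomial.eval₂_eq_eval_map, Polynomial.map_id,
    Polynomial.algebraMap_eq] at h
  calc Polynomial.eval t (MvPolynomial.aeval f p)
      = Polynomial.aeval t (MvPolynomial.aeval f p) := by
        rw [Polynomial.aeval_def, Polynomial.eval₂_eq_eval_map]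
        congr 1
        simp [Polynomial.algebraMap_eq]
    _ = MvPolynomial.aeval (fun i => Polynomial.aeval t (f i)) p :=
        MvPolynomial.comp_aeval_apply (f := f) (Polynomial.aeval t) p
    _ = MvPolynomial.eval (fun i => (f i).eval t) p := by
        rw [MvPolynomial.aeval_def]
        simp only [Polynomial.coe_aeval_eq_eval]
        rfl

lemma natDegree_aeval_le {n : ℕ} (f : Fin n → Polynomial ℂ) (hf : ∀ i, (f i).natDegree ≤ 1)
    (p : MvPolynomial (Fin n) ℂ) :
    (MvPolynomial.aeval f p).natDegree ≤ p.totalDegree := by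
  rw [MvPolynomial.aeval_def, MvPolynomial.eval₂_eq]
  apply Polynomial.natDegree_sum_le_of_forall_le
  intro d hd
  calc (algebraMap ℂ ℂ[X] (MvPolynomial.coeff d p) * ∏ i ∈ d.support, f i ^ d i).natDegree
      ≤ (algebraMap ℂ ℂ[X] (MvPolynomial.coeff d p)).natDegree
        + (∏ i ∈ d.support, f i ^ d i).natDegree := Polynomial.natDegree_mul_le
    _ ≤ 0 + ∑ i ∈ d.support, (f i ^ d i).natDegree := by
        gcongr
        · exact le_of_eq (Polynomial.natDegree_C _)
        · exact Polynomial.natDegree_prod_le _ _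
    _ ≤ ∑ i ∈ d.support, d i := by
        rw [zero_add]
        apply Finset.sum_le_sum
        intro i _
        calc (f i ^ d i).natDegree ≤ d i * (f i).natDegree := Polynomial.natDegree_pow_le
          _ ≤ d i * 1 := by gcongr; exact hf i
          _ = d i := mul_one _
    _ ≤ p.totalDegree := MvPolynomial.le_totalDegree hd



/-- Let `K ⊂ ℂ^n` be nonempty and compact, `ε, δ > 0`, `k ≥ 1`, and `p` a polynomial of
degree at most `k` with `|p(ζ)| ≤ e^{kε} sup_K |p|` whenever `dist(ζ, K) ≤ δ`.  If `w ∈ K`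
attains `|p(w)| = sup_K |p|`, then `|p(z)| ≥ (1/2) sup_K |p|` for every `z ∈ ℂ^n` with
`|z - w| < (δ/3) e^{-kε}`. -/
theorem near_max_lower_bound {n : ℕ}
    (K : Set (EuclideanSpace ℂ (Fin n))) (hKne : K.Nonempty) (hK : IsCompact K)
    (ε δ : ℝ) (hε : 0 < ε) (hδ : 0 < δ) (k : ℕ) (hk : 1 ≤ k)
    (p : MvPolynomial (Fin n) ℂ) (hp : p.totalDegree ≤ k)
    (hbd : ∀ ζ : EuclideanSpace ℂ (Fin n), Metric.infDist ζ K ≤ δ →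
      ‖MvPolynomial.eval (fun i => ζ i) p‖ ≤ Real.exp ((k : ℝ) * ε) *
        sSup ((fun ξ : EuclideanSpace ℂ (Fin n) => ‖MvPolynomial.eval (fun i => ξ i) p‖) '' K))
    (w : EuclideanSpace ℂ (Fin n)) (hw : w ∈ K)
    (hmax : ‖MvPolynomial.eval (fun i => w i) p‖ =
      sSup ((fun ξ : EuclideanSpace ℂ (Fin n) => ‖MvPolynomial.eval (fun i => ξ i) p‖) '' K))
    (z : EuclideanSpace ℂ (Fin n))
    (hz : ‖z - w‖ < δ / 3 * Real.exp (-((k : ℝ) * ε))) :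
    (1 / 2) * sSup ((fun ξ : EuclideanSpace ℂ (Fin n) =>
        ‖MvPolynomial.eval (fun i => ξ i) p‖) '' K) ≤
      ‖MvPolynomial.eval (fun i => z i) p‖ := by
  set M := sSup ((fun ξ : EuclideanSpace ℂ (Fin n) =>
    ‖MvPolynomial.eval (fun i => ξ i) p‖) '' K) with hM
  have hM0 : 0 ≤ M := hmax ▸ norm_nonneg _
  rcases eq_or_lt_of_le hM0 with hM0' | hMpos
  · rw [← hM0']; simpa using norm_nonneg _
  rcases eq_or_ne z w with rfl | hzw
  · rw [← hmax] at *; linarith [norm_nonneg (MvPolynomial.eval (fun i => z i) p)]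
  have hs : 0 < ‖z - w‖ := by rw [norm_pos_iff, sub_ne_zero]; exact hzw
  set s := ‖z - w‖ with hsdef
  set F : Fin n → Polynomial ℂ :=
    fun i => Polynomial.C (w i) + Polynomial.X * Polynomial.C (z i - w i) with hF
  set q := MvPolynomial.aeval F p with hqdef
  have hFdeg : ∀ i, (F i).natDegree ≤ 1 := by
    intro i
    refine le_trans (Polynomial.natDegree_add_le _ _) ?_
    refine max_le (by simp) (le_trans Polynomial.natDegree_mul_le ?_)
    simp
  have hqdeg : q.natDegree ≤ k := (natDegree_aeval_le F hFdeg p).trans hp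
  have hqeval : ∀ t : ℂ, q.eval t = MvPolynomial.eval (fun i => w i + t * (z i - w i)) p := by
    intro t
    have hfun : (fun i => (F i).eval t) = fun i => w i + t * (z i - w i) := by
      funext i; simp [hF, mul_comm]
    rw [hqdef, eval_aeval_line, hfun]
  set r := δ / s with hrdef
  have hr : 0 < r := div_pos hδ hs
  have hbound : ∀ t : ℂ, ‖t‖ ≤ r → ‖q.eval t‖ ≤ Real.exp ((k : ℝ) * ε) * M := by
    intro t ht
    set ζ : EuclideanSpace ℂ (Fin n) := w + t • (z - w) with hζ
    have hcoord : (fun i => ζ i) = fun i => w i + t * (z i - w i) := by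
      funext i; simp [hζ, smul_eq_mul]
    have hdist : Metric.infDist ζ K ≤ δ := by
      refine le_trans (Metric.infDist_le_dist_of_mem hw) ?_
      rw [dist_eq_norm]
      have hsub : ζ - w = t • (z - w) := by rw [hζ]; abel
      rw [hsub, norm_smul]
      calc ‖t‖ * s ≤ r * s := by gcongr
        _ = δ := div_mul_cancel₀ δ (ne_of_gt hs)
    have := hbd ζ hdist
    rwa [hqeval, ← hcoord]
  have hcoeff : ∀ j, ‖q.coeff j‖ * r ^ j ≤ Real.exp ((k : ℝ) * ε) * M :=
    fun j => poly_coeff_bound q r _ hr hbound j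
  set ρ := s / δ with hρdef
  have hρ0 : 0 < ρ := div_pos hs hδ
  have hρlt : ρ < Real.exp (-((k : ℝ) * ε)) / 3 := by
    rw [hρdef, div_lt_div_iff₀ hδ (by norm_num)]
    calc s * 3 < (δ / 3 * Real.exp (-((k : ℝ) * ε))) * 3 := by gcongr
      _ = Real.exp (-((k : ℝ) * ε)) * δ := by ring
  have hexp1 : Real.exp (-((k : ℝ) * ε)) ≤ 1 := by
    rw [Real.exp_le_one_iff]
    have : (0 : ℝ) ≤ (k : ℝ) * ε := by positivity
    linarith
  have hρ1 : ρ < 1 / 3 := lt_of_lt_of_le hρlt (by linarith)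
  have hrρ : r * ρ = 1 := by rw [hrdef, hρdef]; field_simp
  have hcoeff' : ∀ j, ‖q.coeff j‖ ≤ Real.exp ((k : ℝ) * ε) * M * ρ ^ j := by
    intro j
    have h := hcoeff j
    have hpow : r ^ j * ρ ^ j = 1 := by rw [← mul_pow, hrρ, one_pow]
    calc ‖q.coeff j‖ = (‖q.coeff j‖ * r ^ j) * ρ ^ j := by
          rw [mul_assoc, hpow, mul_one]
      _ ≤ (Real.exp ((k : ℝ) * ε) * M) * ρ ^ j := by gcongr
  have hc0 : q.eval 0 = MvPolynomial.eval (fun i => w i) p := by rw [hqeval]; simp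
  have hc1 : q.eval 1 = MvPolynomial.eval (fun i => z i) p := by rw [hqeval]; simp
  have hsum1 : q.eval 1 = ∑ j ∈ Finset.range (k + 1), q.coeff j := by
    rw [Polynomial.eval_eq_sum_range' (lt_of_le_of_lt hqdeg (Nat.lt_succ_self k)) 1]
    simp
  have hdiffeq : q.eval 1 - q.eval 0 = ∑ j ∈ Finset.Ico 1 (k + 1), q.coeff j := by
    rw [hsum1, ← Polynomial.coeff_zero_eq_eval_zero, Finset.range_eq_Ico,
      Finset.sum_eq_sum_Ico_succ_bot (Nat.succ_pos k)]
    ring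
  have hgeomsum : ∑ j ∈ Finset.range k, ρ ^ j ≤ (1 - ρ)⁻¹ := by
    calc ∑ j ∈ Finset.range k, ρ ^ j
        ≤ ∑' j : ℕ, ρ ^ j := Summable.sum_le_tsum _ (fun i _ => by positivity)
          (summable_geometric_of_lt_one hρ0.le (by linarith))
      _ = (1 - ρ)⁻¹ := tsum_geometric_of_lt_one hρ0.le (by linarith)
  have hgeom : ∑ j ∈ Finset.Ico 1 (k + 1), ρ ^ j ≤ ρ * (1 - ρ)⁻¹ := by
    rw [Finset.sum_Ico_eq_sum_range]
    simp only [Nat.add_sub_cancel]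
    calc ∑ j ∈ Finset.range k, ρ ^ (1 + j)
        = ρ * ∑ j ∈ Finset.range k, ρ ^ j := by
          rw [Finset.mul_sum]
          exact Finset.sum_congr rfl fun j _ => by rw [pow_add, pow_one]
      _ ≤ ρ * (1 - ρ)⁻¹ := mul_le_mul_of_nonneg_left hgeomsum hρ0.le
  have hinv : (1 - ρ)⁻¹ ≤ 3 / 2 := by
    rw [inv_le_comm₀ (by linarith) (by norm_num)]
    linarith
  have hsumbound : ‖q.eval 1 - q.eval 0‖ ≤ M / 2 := by
    rw [hdiffeq]
    have hexp : Real.exp ((k : ℝ) * ε) * Real.exp (-((k : ℝ) * ε)) = 1 := by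
      rw [← Real.exp_add]; simp
    calc ‖∑ j ∈ Finset.Ico 1 (k + 1), q.coeff j‖
        ≤ ∑ j ∈ Finset.Ico 1 (k + 1), ‖q.coeff j‖ := norm_sum_le _ _
      _ ≤ ∑ j ∈ Finset.Ico 1 (k + 1), Real.exp ((k : ℝ) * ε) * M * ρ ^ j :=
          Finset.sum_le_sum fun j _ => hcoeff' j
      _ = Real.exp ((k : ℝ) * ε) * M * ∑ j ∈ Finset.Ico 1 (k + 1), ρ ^ j := by
          rw [← Finset.mul_sum]
      _ ≤ Real.exp ((k : ℝ) * ε) * M * (ρ * (1 - ρ)⁻¹) := by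
          apply mul_le_mul_of_nonneg_left hgeom (by positivity)
      _ ≤ Real.exp ((k : ℝ) * ε) * M *
            ((Real.exp (-((k : ℝ) * ε)) / 3) * (3 / 2)) := by
          apply mul_le_mul_of_nonneg_left _ (by positivity)
          exact mul_le_mul hρlt.le hinv (inv_nonneg.2 (by linarith)) (by positivity)
      _ = M / 2 := by linear_combination (M / 2) * hexp
  have hkey : M - ‖MvPolynomial.eval (fun i => z i) p‖ ≤ M / 2 := by
    calc M - ‖MvPolynomial.eval (fun i => z i) p‖
        = ‖q.eval 0‖ - ‖q.eval 1‖ := by rw [hc0, hc1, hmax]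
      _ ≤ ‖q.eval 0 - q.eval 1‖ := norm_sub_norm_le _ _
      _ = ‖q.eval 1 - q.eval 0‖ := norm_sub_rev _ _
      _ ≤ M / 2 := hsumbound
  linarith
end
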